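/- The constant 1/3 in Bohr's inequality is best possible: for every r > 1/3 there exists a holomorphic function f on the unit disk with |f| ≤ 1 whose Taylor coefficients a_k satisfy Σ_{k=0}^∞ |a_k| r^k > 1. -/

import Mathlib

/-- Coefficients of the Möbius map `z ↦ (a - z)/(1 - a z)`. -/
noncomputable def bohrCoef (a : ℝ) : ℕ → ℂ
  | 0 => (a : ℂ)
  | (n+1) => -(1 - (a : ℂ)^2) * (a : ℂ)^n

lemma bohrCoef_norm (a : ℝ) (h0 : 0 ≤ a) (h1 : a ≤ 1) :
    ∀ k, ‖bohrCoef a k‖ = (fun k => match k with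
      | 0 => a
      | (n+1) => (1 - a^2) * a^n) k
  | 0 => by simp [bohrCoef, abs_of_nonneg h0]
  | (n+1) => by
      have h2 : (0:ℝ) ≤ 1 - a^2 := by nlinarith
      have : ((-(1 - (a:ℂ)^2) * (a:ℂ)^n) : ℂ) = ((-(1 - a^2) * a^n : ℝ) : ℂ) := by
        push_cast; ring
      rw [bohrCoef, this, Complex.norm_real, Real.norm_eq_abs, abs_mul, abs_neg,
        abs_of_nonneg h2, abs_pow, abs_of_nonneg h0]

/-- Sharpness of the Bohr radius 1/3. -/
theorem bohr_radius_sharp (r : ℝ) (hr : 1 / 3 < r) :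
    ∃ (f : ℂ → ℂ) (a : ℕ → ℂ),
      (∀ z : ℂ, ‖z‖ < 1 → HasSum (fun k : ℕ => a k * z ^ k) (f z)) ∧
      (∀ z : ℂ, ‖z‖ < 1 → ‖f z‖ ≤ 1) ∧
      Summable (fun k : ℕ => ‖a k‖ * r ^ k) ∧
      1 < ∑' k : ℕ, ‖a k‖ * r ^ k := by
  have hr0 : 0 < r := lt_trans (by norm_num) hr
  obtain ⟨a, ha0, ha1, har, hgt⟩ :
      ∃ a : ℝ, 0 < a ∧ a < 1 ∧ a * r < 1 ∧ 1 < r * (1 + 2 * a) := by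
    rcases le_or_gt r 1 with h1 | h1
    · refine ⟨(1 + r) / (4 * r), by positivity, ?_, ?_, ?_⟩
      · rw [div_lt_one (by positivity)]; linarith
      · have h : (1 + r) / (4 * r) * r = (1 + r) / 4 := by field_simp
        rw [h]; linarith
      · have h : r * (1 + 2 * ((1 + r) / (4 * r))) = r + (1 + r) / 2 := by
          field_simp; ring
        rw [h]; linarith
    · refine ⟨1 / (2 * r), by positivity, ?_, ?_, ?_⟩
      · rw [div_lt_one (by positivity)]; linarith
      · rw [div_mul_eq_mul_div, div_lt_one (by positivity)]; linarith
      · have : r * (1 + 2 * (1 / (2 * r))) = r + 1 := by field_simp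
        rw [this]; linarith
  have haR : a * r < 1 := har
  have har' : 0 < 1 - a * r := by linarith
  refine ⟨fun z => ((a : ℂ) - z) / (1 - (a : ℂ) * z), bohrCoef a, ?_, ?_, ?_, ?_⟩
  · -- HasSum of the Taylor series
    intro z hz
    have hza : ‖(a : ℂ) * z‖ < 1 := by
      rw [norm_mul, Complex.norm_real, Real.norm_eq_abs, abs_of_nonneg ha0.le]
      calc a * ‖z‖ ≤ 1 * ‖z‖ := by
            apply mul_le_mul_of_nonneg_right ha1.le (norm_nonneg z)
        _ = ‖z‖ := one_mul _
        _ < 1 := hz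
    have hden : (1 - (a : ℂ) * z) ≠ 0 := by
      intro h
      rw [sub_eq_zero] at h
      rw [← h] at hza
      simp at hza
    have geo := hasSum_geometric_of_norm_lt_one hza
    have h2 := geo.mul_left (-(1 - (a : ℂ)^2) * z)
    have key : HasSum (fun n : ℕ => bohrCoef a (n + 1) * z ^ (n + 1))
        (-(1 - (a : ℂ)^2) * z * (1 - (a : ℂ) * z)⁻¹) := by
      have e : (fun n : ℕ => bohrCoef a (n + 1) * z ^ (n + 1))
          = fun n : ℕ => -(1 - (a : ℂ)^2) * z * ((a : ℂ) * z) ^ n := by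
        funext n
        rw [bohrCoef]
        rw [mul_pow, pow_succ]
        ring
      rw [e]; exact h2
    have key2 := (hasSum_nat_add_iff (f := fun k : ℕ => bohrCoef a k * z ^ k) 1).mp key
    convert key2 using 1
    case e'_3 => rfl
    simp only [Finset.range_one, Finset.sum_singleton, pow_zero, mul_one]
    rw [bohrCoef]
    field_simp
    ring
  · -- modulus bound
    intro z hz
    have hza : ‖(a : ℂ) * z‖ < 1 := by
      rw [norm_mul, Complex.norm_real, Real.norm_eq_abs, abs_of_nonneg ha0.le]
      calc a * ‖z‖ ≤ 1 * ‖z‖ := by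
            apply mul_le_mul_of_nonneg_right ha1.le (norm_nonneg z)
        _ = ‖z‖ := one_mul _
        _ < 1 := hz
    have hden : (1 - (a : ℂ) * z) ≠ 0 := by
      intro h
      rw [sub_eq_zero] at h
      rw [← h] at hza
      simp at hza
    have hpos : 0 < ‖1 - (a : ℂ) * z‖ := norm_pos_iff.mpr hden
    rw [norm_div, div_le_one hpos]
    have hz2 : z.re * z.re + z.im * z.im < 1 := by
      have h := Complex.normSq_apply z
      have : Complex.normSq z < 1 := by
        rw [← Complex.sq_norm]
        have : ‖z‖ < 1 := hz
        nlinarith [norm_nonneg z]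
      linarith [h ▸ this]
    have hsq : ‖(a : ℂ) - z‖^2 ≤ ‖1 - (a : ℂ) * z‖^2 := by
      rw [show ‖(a : ℂ) - z‖^2 = Complex.normSq ((a : ℂ) - z) by
            rw [Complex.sq_norm],
          show ‖1 - (a : ℂ) * z‖^2 = Complex.normSq (1 - (a : ℂ) * z) by
            rw [Complex.sq_norm]]
      simp [Complex.normSq_apply, Complex.sub_re, Complex.sub_im, Complex.mul_re,
        Complex.mul_im, Complex.ofReal_re, Complex.ofReal_im]
      nlinarith [mul_nonneg (by nlinarith : (0:ℝ) ≤ 1 - a^2)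
        (by nlinarith : (0:ℝ) ≤ 1 - (z.re * z.re + z.im * z.im))]
    nlinarith [norm_nonneg ((a : ℂ) - z), norm_nonneg (1 - (a : ℂ) * z)]
  · -- summability
    have geo := hasSum_geometric_of_lt_one (mul_nonneg ha0.le hr0.le) haR
    have h2 := geo.mul_left ((1 - a^2) * r)
    have key : HasSum (fun n : ℕ => ‖bohrCoef a (n + 1)‖ * r ^ (n + 1))
        ((1 - a^2) * r * (1 - a * r)⁻¹) := by
      have e : (fun n : ℕ => ‖bohrCoef a (n + 1)‖ * r ^ (n + 1))
          = fun n : ℕ => (1 - a^2) * r * (a * r) ^ n := by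
        funext n
        rw [bohrCoef_norm a ha0.le ha1.le]
        simp only [mul_pow, pow_succ]
        ring
      rw [e]; exact h2
    exact ((hasSum_nat_add_iff (f := fun k : ℕ => ‖bohrCoef a k‖ * r ^ k) 1).mp
      key).summable
  · -- the sum exceeds 1
    have geo := hasSum_geometric_of_lt_one (mul_nonneg ha0.le hr0.le) haR
    have h2 := geo.mul_left ((1 - a^2) * r)
    have key : HasSum (fun n : ℕ => ‖bohrCoef a (n + 1)‖ * r ^ (n + 1))
        ((1 - a^2) * r * (1 - a * r)⁻¹) := by
      have e : (fun n : ℕ => ‖bohrCoef a (n + 1)‖ * r ^ (n + 1))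
          = fun n : ℕ => (1 - a^2) * r * (a * r) ^ n := by
        funext n
        rw [bohrCoef_norm a ha0.le ha1.le]
        simp only [mul_pow, pow_succ]
        ring
      rw [e]; exact h2
    have key2 := (hasSum_nat_add_iff (f := fun k : ℕ => ‖bohrCoef a k‖ * r ^ k) 1).mp key
    rw [key2.tsum_eq]
    simp only [Finset.range_one, Finset.sum_singleton, pow_zero, mul_one]
    rw [bohrCoef_norm a ha0.le ha1.le]
    have hx : 1 - a < (1 - a^2) * r * (1 - a * r)⁻¹ := by
      rw [← div_eq_mul_inv, lt_div_iff₀ har']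
      nlinarith
    simp only []
    linarith
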